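/- For all natural numbers r ≤ n and reals x, 0 < q < 1, the q-Bernstein polynomials satisfy the inversion formula ([x]_q)^r = Σ_{l=0}^{n} Σ_{m=0}^{n-l} S(n-l, m) · (C(n, l)/C(n, r)) · ([x]_{q^{-1}})_m · B_{r,l}(x, q), where ([x]_{q^{-1}})_m is the falling factorial and B_{r,l}(x,q) = 0 for l < r (this is the Y = 1 case of Theorem 2.3, where E[Y^{n-r}] = 1). -/

import Mathlib

open PowerSeries


/-- The `q`-analog `[t]_q = (q^t - 1)/(q - 1)`, where `q ^ t` is the real power. -/
noncomputable def qnum (q t : ℝ) : ℝ := (q ^ t - 1) / (q - 1)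

/-- The falling factorial `(c)_m = c(c-1)⋯(c-m+1)` of a real number. -/
noncomputable def fallFact (c : ℝ) (m : ℕ) : ℝ := ∏ i ∈ Finset.range m, (c - i)

/-- The `q`-Bernstein polynomial `B_{r,l}(x,q) = C(l,r) ([x]_q)^r ([1-x]_q)^{l-r}`;
it vanishes for `l < r` since then `C(l,r) = 0`. -/
noncomputable def qBernstein (r l : ℕ) (x q : ℝ) : ℝ :=
  (l.choose r : ℝ) * (qnum q x) ^ r * (qnum q (1 - x)) ^ (l - r)

lemma fallFact_zero (c : ℝ) : fallFact c 0 = 1 := by simp [fallFact]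

lemma fallFact_succ (c : ℝ) (m : ℕ) : fallFact c (m + 1) = fallFact c m * (c - m) :=
  Finset.prod_range_succ _ _

lemma ES_lt {k m : ℕ} (h : k < m) :
    (PowerSeries.coeff (R := ℝ) k) ((PowerSeries.exp ℝ - 1) ^ m) = 0 := by
  have hX : (PowerSeries.X : ℝ⟦X⟧) ∣ (PowerSeries.exp ℝ - 1) := by
    rw [PowerSeries.X_dvd_iff]
    simp [PowerSeries.constantCoeff_exp]
  exact PowerSeries.X_pow_dvd_iff.mp (pow_dvd_pow_of_dvd hX m) k h

lemma psDerivExp : d⁄dX ℝ (PowerSeries.exp ℝ) = PowerSeries.exp ℝ := by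
  ext n
  rw [PowerSeries.coeff_derivative, PowerSeries.coeff_exp, PowerSeries.coeff_exp]
  have h2 : (n.factorial : ℝ) ≠ 0 := Nat.cast_ne_zero.mpr n.factorial_ne_zero
  have h3 : ((n:ℝ)+1) ≠ 0 := by positivity
  simp only [map_div₀, map_one, map_natCast]
  rw [Nat.factorial_succ]
  push_cast
  field_simp

lemma psDerivPow (m : ℕ) :
    d⁄dX ℝ ((PowerSeries.exp ℝ - 1) ^ (m+1)) =
      ((m:ℝ)+1) • (((PowerSeries.exp ℝ - 1) ^ (m+1)) + ((PowerSeries.exp ℝ - 1) ^ m)) := by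
  rw [Derivation.leibniz_pow]
  have hd : d⁄dX ℝ (PowerSeries.exp ℝ - 1) = PowerSeries.exp ℝ := by
    rw [map_sub, psDerivExp, Derivation.map_one_eq_zero, sub_zero]
  rw [hd, Nat.add_sub_cancel, smul_eq_mul, nsmul_eq_mul,
    PowerSeries.smul_eq_C_mul, ← map_natCast (PowerSeries.C (R := ℝ)) (m+1)]
  push_cast
  ring

lemma ES_rec (k m : ℕ) :
    ((k:ℝ)+1) * (PowerSeries.coeff (R := ℝ) (k+1)) ((PowerSeries.exp ℝ - 1) ^ (m+1)) =
      ((m:ℝ)+1) * ((PowerSeries.coeff (R := ℝ) k) ((PowerSeries.exp ℝ - 1) ^ (m+1)) +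
        (PowerSeries.coeff (R := ℝ) k) ((PowerSeries.exp ℝ - 1) ^ m)) := by
  have := congrArg (PowerSeries.coeff (R := ℝ) k) (psDerivPow m)
  rw [PowerSeries.coeff_derivative, map_smul, map_add, smul_eq_mul] at this
  linear_combination this

section Stirling

variable (S : ℕ → ℕ → ℝ)
  (hS : ∀ m : ℕ, PowerSeries.mk (fun k => S k m / (k.factorial : ℝ)) =
      ((m.factorial : ℝ)⁻¹) • (PowerSeries.exp ℝ - 1) ^ m)

include hS

lemma S_val (k m : ℕ) : S k m = (k.factorial : ℝ) *
    ((m.factorial : ℝ)⁻¹ * (PowerSeries.coeff (R := ℝ) k) ((PowerSeries.exp ℝ - 1) ^ m)) := by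
  have h := congrArg (PowerSeries.coeff (R := ℝ) k) (hS m)
  rw [PowerSeries.coeff_mk, map_smul, smul_eq_mul] at h
  have hk : (k.factorial : ℝ) ≠ 0 := Nat.cast_ne_zero.mpr k.factorial_ne_zero
  field_simp at h
  field_simp
  linear_combination h

lemma S_zero_zero : S 0 0 = 1 := by
  rw [S_val S hS]
  simp

lemma S_succ_zero (k : ℕ) : S (k+1) 0 = 0 := by
  rw [S_val S hS]
  simp [PowerSeries.coeff_one]

lemma S_eq_zero_of_lt {k m : ℕ} (h : k < m) : S k m = 0 := by
  rw [S_val S hS, ES_lt h]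
  ring

lemma S_rec (k m : ℕ) : S (k+1) (m+1) = ((m:ℝ)+1) * S k (m+1) + S k m := by
  rw [S_val S hS, S_val S hS, S_val S hS]
  have h := ES_rec k m
  have hk : ((k:ℝ)+1) ≠ 0 := by positivity
  have hE : (PowerSeries.coeff (R := ℝ) (k+1)) ((PowerSeries.exp ℝ - 1) ^ (m+1)) =
      ((m:ℝ)+1) * ((PowerSeries.coeff (R := ℝ) k) ((PowerSeries.exp ℝ - 1) ^ (m+1)) +
        (PowerSeries.coeff (R := ℝ) k) ((PowerSeries.exp ℝ - 1) ^ m)) / ((k:ℝ)+1) := by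
    field_simp
    linarith [h]
  rw [hE, Nat.factorial_succ, Nat.factorial_succ]
  have hkf : (k.factorial : ℝ) ≠ 0 := Nat.cast_ne_zero.mpr k.factorial_ne_zero
  have hmf : (m.factorial : ℝ) ≠ 0 := Nat.cast_ne_zero.mpr m.factorial_ne_zero
  have hm : ((m:ℝ)+1) ≠ 0 := by positivity
  push_cast
  field_simp

lemma stirling_fallFact (c : ℝ) (k : ℕ) :
    ∑ m ∈ Finset.range (k+1), S k m * fallFact c m = c ^ k := by
  induction k with
  | zero => simp [fallFact_zero, S_zero_zero S hS]
  | succ k ih =>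
    rw [Finset.sum_range_succ' (fun m => S (k+1) m * fallFact c m) (k+1)]
    have h0 : S (k+1) 0 * fallFact c 0 = 0 := by
      rw [S_succ_zero S hS]; ring
    rw [h0, add_zero]
    have hsplit : ∀ m ∈ Finset.range (k+1), S (k+1) (m+1) * fallFact c (m+1)
        = ((m:ℝ)+1) * S k (m+1) * fallFact c (m+1)
          + S k m * (fallFact c m * (c - m)) := by
      intro m _
      rw [S_rec S hS, fallFact_succ]
      ring
    rw [Finset.sum_congr rfl hsplit, Finset.sum_add_distrib]
    have h1 : ∑ m ∈ Finset.range (k+1), ((m:ℝ)+1) * S k (m+1) * fallFact c (m+1)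
        = ∑ m ∈ Finset.range (k+1), (m:ℝ) * S k m * fallFact c m := by
      have h2 := Finset.sum_range_succ' (fun m => (m:ℝ) * S k m * fallFact c m) (k+1)
      rw [Finset.sum_range_succ (fun m => (m:ℝ) * S k m * fallFact c m) (k+1)] at h2
      have h3 : S k (k+1) = 0 := S_eq_zero_of_lt S hS (by omega)
      simp only [h3] at h2
      push_cast at h2 ⊢
      simp only [mul_zero, zero_mul, add_zero, Nat.cast_zero, fallFact_zero, mul_one] at h2
      rw [← h2]
    rw [h1, ← Finset.sum_add_distrib]
    have h4 : ∀ m ∈ Finset.range (k+1),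
        (m:ℝ) * S k m * fallFact c m + S k m * (fallFact c m * (c - m))
          = c * (S k m * fallFact c m) := by
      intro m _; ring
    rw [Finset.sum_congr rfl h4, ← Finset.mul_sum, ih, pow_succ]
    ring

end Stirling

lemma key_binom (b c : ℝ) (hbc : b + c = 1) (r n : ℕ) (hrn : r ≤ n) :
    ∑ l ∈ Finset.range (n+1),
      (n.choose l : ℝ) * (l.choose r : ℝ) * b ^ (l - r) * c ^ (n - l)
      = (n.choose r : ℝ) := by
  rw [Finset.range_eq_Ico,
    ← Finset.sum_Ico_consecutive _ (Nat.zero_le r) (by omega : r ≤ n+1)]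
  have h0 : ∑ l ∈ Finset.Ico 0 r,
      (n.choose l : ℝ) * (l.choose r : ℝ) * b ^ (l - r) * c ^ (n - l) = 0 := by
    apply Finset.sum_eq_zero
    intro l hl
    have : l < r := (Finset.mem_Ico.mp hl).2
    rw [Nat.choose_eq_zero_of_lt this]
    push_cast
    ring
  rw [h0, zero_add, Finset.sum_Ico_eq_sum_range]
  have hterm : ∀ j ∈ Finset.range (n + 1 - r),
      (n.choose (r+j) : ℝ) * ((r+j).choose r : ℝ) * b ^ (r+j-r) * c ^ (n-(r+j))
        = (n.choose r : ℝ) * (((n-r).choose j : ℝ)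
            * b ^ j * c ^ ((n-r) - j)) := by
    intro j hj
    have hj' : j ≤ n - r := by
      have := Finset.mem_range.mp hj; omega
    have hch : n.choose (r+j) * (r+j).choose r = n.choose r * (n-r).choose (r+j-r) :=
      Nat.choose_mul (by omega)
    rw [Nat.add_sub_cancel_left] at hch ⊢
    have hsub : n - (r + j) = (n - r) - j := by omega
    rw [hsub, ← Nat.cast_mul, hch, Nat.cast_mul]
    ring
  rw [Finset.sum_congr rfl hterm, ← Finset.mul_sum]
  have hpow : ∑ j ∈ Finset.range (n + 1 - r),
      (((n-r).choose j : ℝ) * b ^ j * c ^ ((n-r) - j)) = 1 := by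
    have hnr : n + 1 - r = (n - r) + 1 := by omega
    rw [hnr]
    have h5 := add_pow b c (n - r)
    rw [hbc, one_pow] at h5
    calc ∑ j ∈ Finset.range ((n-r) + 1),
          (((n-r).choose j : ℝ) * b ^ j * c ^ ((n-r) - j))
        = ∑ j ∈ Finset.range ((n-r) + 1), b ^ j * c ^ ((n-r) - j) * ((n-r).choose j : ℝ) :=
          Finset.sum_congr rfl (fun j _ => by ring)
      _ = 1 := h5.symm
  rw [hpow, mul_one]

lemma qnum_add_one (q x : ℝ) (hq0 : 0 < q) (hq1 : q < 1) :
    qnum q (1 - x) + qnum q⁻¹ x = 1 := by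
  have hq : q ≠ 0 := hq0.ne'
  have hq1' : q - 1 ≠ 0 := sub_ne_zero.mpr hq1.ne
  have hy : (0:ℝ) < q ^ x := Real.rpow_pos_of_pos hq0 x
  have e1 : q ^ (1 - x) = q ^ (1:ℝ) / q ^ x := Real.rpow_sub hq0 1 x
  have e2 : q⁻¹ ^ x = (q ^ x)⁻¹ := Real.inv_rpow hq0.le x
  have h1q : (1:ℝ) - q ≠ 0 := sub_ne_zero.mpr (ne_of_gt hq1)
  have e3 : q⁻¹ - 1 = (1 - q) / q := by field_simp
  unfold qnum
  rw [e1, e2, e3, Real.rpow_one]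
  field_simp
  ring

/-- Theorem 2.3 (case `Y = 1`): inversion formula expressing `([x]_q)^r` through
`q`-Bernstein polynomials, Stirling numbers of the second kind `S`
(egf `(e^v-1)^m/m!`) and falling factorials of `[x]_{q⁻¹}`. -/
theorem stmt_18 (q x : ℝ) (hq0 : 0 < q) (hq1 : q < 1) (r n : ℕ) (hrn : r ≤ n)
    (S : ℕ → ℕ → ℝ)
    (hS : ∀ m : ℕ, PowerSeries.mk (fun k => S k m / (k.factorial : ℝ)) =
      ((m.factorial : ℝ)⁻¹) • (PowerSeries.exp ℝ - 1) ^ m) :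
    (qnum q x) ^ r =
      ∑ l ∈ Finset.range (n + 1), ∑ m ∈ Finset.range (n - l + 1),
        S (n - l) m * ((n.choose l : ℝ) / (n.choose r : ℝ)) *
          fallFact (qnum q⁻¹ x) m * qBernstein r l x q := by
  set a := qnum q x with ha
  set b := qnum q (1 - x) with hb
  set c := qnum q⁻¹ x with hc
  have hbc : b + c = 1 := qnum_add_one q x hq0 hq1
  have hinner : ∀ l ∈ Finset.range (n+1),
      (∑ m ∈ Finset.range (n - l + 1),
        S (n - l) m * ((n.choose l : ℝ) / (n.choose r : ℝ)) *
          fallFact c m * qBernstein r l x q)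
      = c ^ (n - l) * (((n.choose l : ℝ) / (n.choose r : ℝ)) * qBernstein r l x q) := by
    intro l _
    rw [← stirling_fallFact S hS c (n - l), Finset.sum_mul]
    apply Finset.sum_congr rfl
    intro m _
    ring
  rw [Finset.sum_congr rfl hinner]
  have hcr : ((n.choose r : ℕ) : ℝ) ≠ 0 := Nat.cast_ne_zero.mpr (Nat.choose_pos hrn).ne'
  have hkey := key_binom b c hbc r n hrn
  have hterm : ∀ l ∈ Finset.range (n+1),
      c ^ (n - l) * (((n.choose l : ℝ) / (n.choose r : ℝ)) * qBernstein r l x q)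
        = (a ^ r / (n.choose r : ℝ)) *
            ((n.choose l : ℝ) * (l.choose r : ℝ) * b ^ (l - r) * c ^ (n - l)) := by
    intro l _
    unfold qBernstein
    rw [← ha, ← hb]
    ring
  rw [Finset.sum_congr rfl hterm, ← Finset.mul_sum, hkey]
  field_simp
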